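/- Let f, f̂ : ℝ^{p₁} × ⋯ × ℝ^{pₙ} → ℝ with f̂ convex, f̂ ≥ f pointwise, |f̂(x) − f(x)| ≤ (1/2)∑ᵢ ‖xᵢ − κᵢ‖²_{Lᵢ}, and x ↦ f̂(x) − (1/2)∑ᵢ ‖xᵢ − κᵢ‖²_{Pᵢ} convex, where each Lᵢ, Pᵢ are positive semidefinite. Then for all x, y and every u ∈ ∂f̂(x): f(x) + ⟨u, y−x⟩ − f(y) ≤ (1/2)∑ᵢ (‖yᵢ − κᵢ‖²_{Lᵢ} − ‖yᵢ − xᵢ‖²_{Pᵢ}). -/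

import Mathlib

open Matrix

private lemma quad_expand {m : ℕ} (M : Matrix (Fin m) (Fin m) ℝ) (hM : Mᵀ = M)
    (a b : Fin m → ℝ) (t : ℝ) :
    (a + t • b) ⬝ᵥ (M *ᵥ (a + t • b))
      = a ⬝ᵥ (M *ᵥ a) + 2 * t * (b ⬝ᵥ (M *ᵥ a)) + t ^ 2 * (b ⬝ᵥ (M *ᵥ b)) := by
  have hsym : a ⬝ᵥ (M *ᵥ b) = b ⬝ᵥ (M *ᵥ a) := by
    rw [dotProduct_mulVec, ← mulVec_transpose, hM, dotProduct_comm]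
  simp only [mulVec_add, mulVec_smul, dotProduct_add, add_dotProduct, smul_dotProduct,
    dotProduct_smul, smul_eq_mul, hsym]
  ring

/-- Key property of majorant first-order surrogates (multi-block case, Lemma 2). -/
theorem stmt_7 {n : ℕ} (p : Fin n → ℕ)
    (f fhat : (∀ i, Fin (p i) → ℝ) → ℝ)
    (κ : ∀ i, Fin (p i) → ℝ)
    (L P : ∀ i, Matrix (Fin (p i)) (Fin (p i)) ℝ)
    (hLpsd : ∀ i, (L i).PosSemidef) (hPpsd : ∀ i, (P i).PosSemidef)
    (hconv : ConvexOn ℝ Set.univ fhat)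
    (hmaj : ∀ x, f x ≤ fhat x)
    (hprox : ∀ x, |fhat x - f x| ≤ (1/2) * ∑ i, (x i - κ i) ⬝ᵥ (L i *ᵥ (x i - κ i)))
    (hstrong : ConvexOn ℝ Set.univ
      (fun x => fhat x - (1/2) * ∑ i, (x i - κ i) ⬝ᵥ (P i *ᵥ (x i - κ i))))
    (x y u : ∀ i, Fin (p i) → ℝ)
    (hu : ∀ z, fhat x + ∑ i, (u i) ⬝ᵥ (z i - x i) ≤ fhat z) :
    f x + ∑ i, (u i) ⬝ᵥ (y i - x i) - f y
      ≤ (1/2) * ∑ i, ((y i - κ i) ⬝ᵥ (L i *ᵥ (y i - κ i))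
          - (y i - x i) ⬝ᵥ (P i *ᵥ (y i - x i))) := by
  have hPsymm : ∀ i, (P i)ᵀ = P i := fun i =>
    ((P i).conjTranspose_eq_transpose_of_trivial).symm.trans (hPpsd i).1
  -- abbreviations
  set U : ℝ := ∑ i, (u i) ⬝ᵥ (y i - x i) with hU
  set S : ℝ := ∑ i, (y i - x i) ⬝ᵥ (P i *ᵥ (y i - x i)) with hS
  set C : ℝ := ∑ i, (y i - x i) ⬝ᵥ (P i *ᵥ (x i - κ i)) with hC
  set q : (∀ i, Fin (p i) → ℝ) → ℝ :=
    fun z => (1/2) * ∑ i, (z i - κ i) ⬝ᵥ (P i *ᵥ (z i - κ i)) with hq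
  have hSnonneg : 0 ≤ S := by
    apply Finset.sum_nonneg
    intro i _
    simpa using (hPpsd i).dotProduct_mulVec_nonneg (y i - x i)
  -- expansion of q along the segment
  have hqz : ∀ t : ℝ, q ((1 - t) • x + t • y) = q x + t * C + t ^ 2 / 2 * S := by
    intro t
    have hpt : ∀ i, ((1 - t) • x + t • y) i - κ i = (x i - κ i) + t • (y i - x i) := by
      intro i; funext j
      simp [Pi.add_apply, Pi.smul_apply, smul_eq_mul]
      ring
    simp only [hq, hC, hS]
    calc (1/2) * ∑ i, ((((1 - t) • x + t • y) i - κ i) ⬝ᵥ (P i *ᵥ (((1 - t) • x + t • y) i - κ i)))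
        = (1/2) * ∑ i, ((x i - κ i) ⬝ᵥ (P i *ᵥ (x i - κ i))
            + 2 * t * ((y i - x i) ⬝ᵥ (P i *ᵥ (x i - κ i)))
            + t ^ 2 * ((y i - x i) ⬝ᵥ (P i *ᵥ (y i - x i)))) := by
          congr 1
          refine Finset.sum_congr rfl fun i _ => ?_
          rw [hpt i, quad_expand _ (hPsymm i)]
      _ = 1 / 2 * ∑ i, (x i - κ i) ⬝ᵥ (P i *ᵥ (x i - κ i))
            + t * ∑ i, (y i - x i) ⬝ᵥ (P i *ᵥ (x i - κ i))
            + t ^ 2 / 2 * ∑ i, (y i - x i) ⬝ᵥ (P i *ᵥ (y i - x i)) := by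
          rw [Finset.sum_add_distrib, Finset.sum_add_distrib, ← Finset.mul_sum, ← Finset.mul_sum]
          ring
  -- main subgradient inequality with strong-convexity-like term, for each t
  have hkey : ∀ t : ℝ, 0 < t → t ≤ 1 →
      U ≤ (fhat y - q y) - (fhat x - q x) + C + t / 2 * S := by
    intro t ht ht1
    have hz := hstrong.2 (Set.mem_univ x) (Set.mem_univ y)
      (by linarith : (0:ℝ) ≤ 1 - t) (le_of_lt ht) (by ring)
    simp only at hz
    have huz := hu ((1 - t) • x + t • y)
    have hzi : ∀ i, ((1 - t) • x + t • y) i - x i = t • (y i - x i) := by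
      intro i; funext j
      simp [Pi.add_apply, Pi.smul_apply, smul_eq_mul]; ring
    have huz' : fhat x + t * U ≤ fhat ((1 - t) • x + t • y) := by
      have : ∑ i, (u i) ⬝ᵥ (((1 - t) • x + t • y) i - x i) = t * U := by
        simp only [hzi, dotProduct_smul, smul_eq_mul, hU, Finset.mul_sum]
      linarith [huz, this.symm ▸ huz]
    have hq' := hqz t
    -- hz : fhat ((1-t)•x+t•y) - q ((1-t)•x+t•y) ≤ (1-t)*(fhat x - q x) + t*(fhat y - q y)
    have hz' : fhat ((1 - t) • x + t • y) - q ((1 - t) • x + t • y)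
        ≤ (1 - t) * (fhat x - q x) + t * (fhat y - q y) := hz
    rw [hq'] at hz'
    have h2 : fhat x + t * U ≤ (1 - t) * (fhat x - q x) + t * (fhat y - q y)
        + q x + t * C + t ^ 2 / 2 * S := by linarith
    have h3 : t * U ≤ t * ((fhat y - q y) - (fhat x - q x) + C + t / 2 * S) := by nlinarith
    exact le_of_mul_le_mul_left (by linarith [h3]) ht
  -- take t → 0
  have hlim : U ≤ (fhat y - q y) - (fhat x - q x) + C := by
    by_contra h
    push_neg at h
    set D : ℝ := U - ((fhat y - q y) - (fhat x - q x) + C) with hD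
    have hDpos : 0 < D := by simp only [hD]; linarith
    rcases eq_or_lt_of_le hSnonneg with hS0 | hSpos
    · have := hkey 1 one_pos le_rfl
      rw [← hS0] at this
      simp only [hD] at hDpos; linarith
    · set t : ℝ := min 1 (D / S) with htdef
      have htpos : 0 < t := lt_min one_pos (div_pos hDpos hSpos)
      have ht1 : t ≤ 1 := min_le_left _ _
      have := hkey t htpos ht1
      have htS : t * S ≤ D := by
        calc t * S ≤ (D / S) * S := by
              exact mul_le_mul_of_nonneg_right (min_le_right _ _) (le_of_lt hSpos)
          _ = D := by field_simp
      simp only [hD] at *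
      linarith
  -- q y - q x - C = S / 2
  have hqyx : q y - q x - C = S / 2 := by
    have h1 := hqz 1
    have hy1 : ((1 : ℝ) - 1) • x + (1 : ℝ) • y = y := by
      funext i j; simp
    rw [hy1] at h1
    rw [h1]; ring
  -- strong subgradient inequality
  have hsg : fhat x + U + S / 2 ≤ fhat y := by
    have : fhat y - fhat x = (fhat y - q y) - (fhat x - q x) + (q y - q x) := by ring
    linarith [hlim, hqyx]
  -- finish
  have hprox_y : fhat y - f y ≤ (1/2) * ∑ i, (y i - κ i) ⬝ᵥ (L i *ᵥ (y i - κ i)) :=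
    le_trans (le_abs_self _) (hprox y)
  have hmx := hmaj x
  have hrhs : (1/2) * ∑ i, ((y i - κ i) ⬝ᵥ (L i *ᵥ (y i - κ i))
          - (y i - x i) ⬝ᵥ (P i *ᵥ (y i - x i)))
      = (1/2) * ∑ i, (y i - κ i) ⬝ᵥ (L i *ᵥ (y i - κ i)) - S / 2 := by
    rw [hS, Finset.sum_sub_distrib]
    ring
  rw [hrhs]
  linarith
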